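/- Let G = L(K(n,2)) for n ≥ 3 with adjacency matrix A (a 2n × 2n matrix). Then (A³ + (4−n)A² − 2(n−2)A)/(n+2) = J, where J is the 2n × 2n all-ones matrix. -/

import Mathlib

open SimpleGraph
open scoped Classical

/-- A graph is 2-variegated (bivariegated) if its vertex set can be partitioned into
two equinumerous parts such that every vertex is adjacent to exactly one vertex
of the part not containing it. -/
def SimpleGraph.IsBivariegated {V : Type*} (G : SimpleGraph V) : Prop :=
  ∃ f : V → Bool,
    Nonempty ({v // f v = true} ≃ {v // f v = false}) ∧
    ∀ v : V, ∃! w : V, f w ≠ f v ∧ G.Adj v w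
/-- The adjacency matrix of the line graph of `K(n,2)` over the reals. -/
noncomputable def adjLKn2 (n : ℕ) :
    Matrix (completeBipartiteGraph (Fin n) (Fin 2)).edgeSet
      (completeBipartiteGraph (Fin n) (Fin 2)).edgeSet ℝ :=
  ((completeBipartiteGraph (Fin n) (Fin 2)).lineGraph).adjMatrix ℝ

open Matrix Kronecker in
noncomputable def JmatN (n : ℕ) : Matrix (Fin n) (Fin n) ℝ := Matrix.of fun _ _ => 1

open Matrix Kronecker in
noncomputable def Pm (n : ℕ) : Matrix (Fin n × Fin 2) (Fin n × Fin 2) ℝ :=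
  (1 : Matrix (Fin n) (Fin n) ℝ) ⊗ₖ (JmatN 2 - 1)

open Matrix Kronecker in
noncomputable def Qm (n : ℕ) : Matrix (Fin n × Fin 2) (Fin n × Fin 2) ℝ :=
  (JmatN n - 1) ⊗ₖ (1 : Matrix (Fin 2) (Fin 2) ℝ)

open Matrix Kronecker

lemma hJJ (n : ℕ) : (JmatN n) * (JmatN n) = (n : ℝ) • JmatN n := by
  ext i j; simp [JmatN, Matrix.mul_apply]

lemma hS2 : (JmatN 2 - 1) * (JmatN 2 - 1) = 1 := by
  ext i j
  fin_cases i <;> fin_cases j <;>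
    simp [JmatN, Matrix.mul_apply, Fin.sum_univ_two, Matrix.one_apply]

lemma hT2 (n : ℕ) :
    (JmatN n - 1) * (JmatN n - 1) = ((n:ℝ)-2) • (JmatN n - 1) + ((n:ℝ)-1) • 1 := by
  rw [sub_mul, one_mul, mul_sub, mul_one, hJJ]
  module

lemma hP2 (n : ℕ) : Pm n * Pm n = 1 := by
  rw [Pm, ← mul_kronecker_mul, hS2, one_mul, one_kronecker_one]

lemma hQ2 (n : ℕ) : Qm n * Qm n = ((n:ℝ)-2) • Qm n + ((n:ℝ)-1) • 1 := by
  rw [Qm, ← mul_kronecker_mul, hT2, one_mul, add_kronecker, smul_kronecker, smul_kronecker,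
    one_kronecker_one]

lemma hPQ (n : ℕ) : Pm n * Qm n = (JmatN n - 1) ⊗ₖ (JmatN 2 - 1) := by
  rw [Pm, Qm, ← mul_kronecker_mul, one_mul, mul_one]

lemma hQP (n : ℕ) : Qm n * Pm n = Pm n * Qm n := by
  rw [hPQ, Pm, Qm, ← mul_kronecker_mul, one_mul, mul_one]

lemma hJm (n : ℕ) :
    (1 : Matrix (Fin n × Fin 2) (Fin n × Fin 2) ℝ) + Pm n + Qm n + Pm n * Qm n
      = Matrix.of fun _ _ => 1 := by
  rw [hPQ]
  ext ⟨i, a⟩ ⟨j, b⟩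
  simp only [Matrix.add_apply, Matrix.kroneckerMap_apply, Matrix.one_apply, Matrix.sub_apply,
    Pm, Qm, JmatN, Matrix.of_apply, Prod.mk.injEq]
  by_cases hij : i = j <;> by_cases hab : a = b <;> simp [hij, hab]

lemma key (n : ℕ) (M : Matrix (Fin n × Fin 2) (Fin n × Fin 2) ℝ) (hM : M = Pm n + Qm n) :
    M * M * M + ((4:ℝ) - n) • (M * M) - (2 * ((n:ℝ) - 2)) • M
      = ((n:ℝ) + 2) • (Matrix.of fun _ _ => (1:ℝ)) := by
  subst hM
  have hMM : (Pm n + Qm n) * (Pm n + Qm n) = (n:ℝ) • 1 + ((n:ℝ)-2) • Qm n + (2:ℝ) • (Pm n * Qm n) := by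
    rw [add_mul, mul_add, mul_add, hP2, hQP, hQ2]
    module
  have hPQP : Pm n * Qm n * Pm n = Qm n := by
    rw [← hQP, mul_assoc, hP2, mul_one]
  have hPQQ : Pm n * Qm n * Qm n = ((n:ℝ)-2) • (Pm n * Qm n) + ((n:ℝ)-1) • Pm n := by
    rw [mul_assoc, hQ2, mul_add, mul_smul_comm, mul_smul_comm, mul_one]
  have hMMM : (Pm n + Qm n) * (Pm n + Qm n) * (Pm n + Qm n)
      = ((3*(n:ℝ)-2)) • Pm n + ((n:ℝ)^2-3*n+6) • Qm n + (3*(n:ℝ)-6) • (Pm n * Qm n)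
        + ((n:ℝ)^2-3*n+2) • (1 : Matrix (Fin n × Fin 2) (Fin n × Fin 2) ℝ) := by
    rw [hMM, add_mul, add_mul, mul_add, mul_add, mul_add, smul_mul_assoc, smul_mul_assoc,
      smul_mul_assoc, smul_mul_assoc, smul_mul_assoc, smul_mul_assoc, one_mul, one_mul,
      hQP, hQ2, hPQP, hPQQ]
    module
  rw [hMMM, hMM, ← hJm n]
  module

open Matrix Kronecker in
noncomputable def toEdge (n : ℕ) (p : Fin n × Fin 2) :
    (completeBipartiteGraph (Fin n) (Fin 2)).edgeSet :=
  ⟨s(Sum.inl p.1, Sum.inr p.2), by simp [completeBipartiteGraph]⟩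

lemma toEdge_bij (n : ℕ) : Function.Bijective (toEdge n) := by
  constructor
  · rintro ⟨i, a⟩ ⟨j, b⟩ h
    have h := congrArg Subtype.val h
    simp only [toEdge, Sym2.eq_iff] at h
    rcases h with ⟨h1, h2⟩ | ⟨h1, h2⟩ <;> simp_all
  · rintro ⟨e, he⟩
    induction e using Sym2.inductionOn with
    | hf x y =>
      rw [SimpleGraph.mem_edgeSet] at he
      rcases x with i | a <;> rcases y with j | b
      · simp [completeBipartiteGraph] at he
      · exact ⟨(i, b), rfl⟩
      · exact ⟨(j, a), Subtype.ext (Sym2.eq_swap)⟩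
      · simp [completeBipartiteGraph] at he

noncomputable def eEq (n : ℕ) :
    (Fin n × Fin 2) ≃ (completeBipartiteGraph (Fin n) (Fin 2)).edgeSet :=
  Equiv.ofBijective _ (toEdge_bij n)

lemma adj_toEdge (n : ℕ) (p q : Fin n × Fin 2) :
    (adjLKn2 n) (toEdge n p) (toEdge n q) = (Pm n + Qm n) p q := by
  obtain ⟨i, a⟩ := p; obtain ⟨j, b⟩ := q
  rw [adjLKn2, SimpleGraph.adjMatrix_apply, SimpleGraph.lineGraph_adj_iff_exists]
  simp only [Pm, Qm, Matrix.add_apply, Matrix.kroneckerMap_apply, Matrix.sub_apply,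
    Matrix.one_apply, JmatN, Matrix.of_apply, ne_eq]
  by_cases hij : i = j <;> by_cases hab : a = b
  · subst hij; subst hab; simp
  · subst hij
    rw [if_pos ⟨(toEdge_bij n).injective.ne (by simp [hab]),
      ⟨Sum.inl i, by simp [toEdge], by simp [toEdge]⟩⟩]
    simp [hab]
  · subst hab
    rw [if_pos ⟨(toEdge_bij n).injective.ne (by simp [hij]),
      ⟨Sum.inr a, by simp [toEdge], by simp [toEdge]⟩⟩]
    simp [hij]
  · rw [if_neg]
    · simp [hij, hab]
    · rintro ⟨-, v, hv1, hv2⟩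
      simp only [toEdge, Sym2.mem_iff] at hv1 hv2
      rcases hv1 with rfl | rfl <;> rcases hv2 with h | h <;> simp_all

lemma hA (n : ℕ) :
    adjLKn2 n = (Matrix.reindexAlgEquiv ℝ ℝ (eEq n)) (Pm n + Qm n) := by
  ext x y
  rw [Matrix.reindexAlgEquiv_apply, Matrix.reindex_apply, Matrix.submatrix_apply,
    ← adj_toEdge]
  congr 1 <;> exact ((eEq n).apply_symm_apply _).symm

theorem adjLKn2_polynomial_eq_allOnes (n : ℕ) (hn : 3 ≤ n) :
    ((n : ℝ) + 2)⁻¹ • ((adjLKn2 n) ^ 3 + ((4 : ℝ) - n) • (adjLKn2 n) ^ 2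
        - (2 * ((n : ℝ) - 2)) • adjLKn2 n)
      = Matrix.of fun _ _ => (1 : ℝ) := by
  have hkey : (Pm n + Qm n) ^ 3 + ((4:ℝ) - n) • (Pm n + Qm n) ^ 2
      - (2 * ((n:ℝ) - 2)) • (Pm n + Qm n)
      = ((n:ℝ) + 2) • (Matrix.of fun _ _ => (1:ℝ)) := by
    rw [pow_succ, pow_two]
    exact key n _ rfl
  have hφJ : (Matrix.reindexAlgEquiv ℝ ℝ (eEq n)) (Matrix.of fun _ _ => (1:ℝ))
      = Matrix.of fun _ _ => 1 := by
    ext x y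
    simp [Matrix.reindexAlgEquiv_apply, Matrix.reindex_apply, Matrix.submatrix_apply]
  have hne : ((n:ℝ) + 2) ≠ 0 := by positivity
  rw [hA n, ← map_pow, ← map_pow, ← _root_.map_smul, ← _root_.map_smul, ← map_add, ← map_sub, hkey,
    _root_.map_smul, hφJ, smul_smul, inv_mul_cancel₀ hne, one_smul]
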